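/- Let A and B be finite sets and S ⊆ A × B. Let K be the fraction field of the multivariate polynomial ring ℝ[X s : s ∈ S], and let M : Matrix A B K be the matrix with M a b = X (a,b) if (a,b) ∈ S and M a b = 0 otherwise. Then the rank of M equals the maximum cardinality of a matching in S, i.e., of a subset of S whose elements have pairwise distinct first coordinates and pairwise distinct second coordinates. -/

import Mathlib

open Matrix

section Aux

variable {K : Type*} [Field K] {A B : Type*} [Fintype A] [Fintype B]
  [DecidableEq A] [DecidableEq B]

/-- Rank of an arbitrary submatrix is at most the rank. -/
lemma my_rank_submatrix_le {ι : Type*} [Fintype ι] (M : Matrix A B K)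
    (f : ι → A) (g : ι → B) : (M.submatrix f g).rank ≤ M.rank := by
  have h : M.submatrix f g =
      (Matrix.of fun i a => if a = f i then (1 : K) else 0) * M *
      (Matrix.of fun b j => if b = g j then (1 : K) else 0) := by
    ext i j
    simp [Matrix.mul_apply, Finset.sum_ite_eq, ite_mul, Finset.sum_ite_eq']
  calc (M.submatrix f g).rank = _ := by rw [h]
    _ ≤ ((Matrix.of fun i a => if a = f i then (1 : K) else 0) * M).rank :=
        rank_mul_le_left _ _
    _ ≤ M.rank := rank_mul_le_right _ _

/-- There exist injective row/column selections of size `M.rank` on which a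
"generalized diagonal" of `M` is entrywise nonzero. -/
lemma my_exists_inj (M : Matrix A B K) :
    ∃ (f : Fin M.rank → A) (g : Fin M.rank → B), Function.Injective f ∧
      Function.Injective g ∧ ∀ i, M (f i) (g i) ≠ 0 := by
  classical
  -- columns
  obtain ⟨b, hbt, hbspan, hbli⟩ := exists_linearIndependent K (Set.range Mᵀ)
  have hbfin : b.Finite := (Set.finite_range Mᵀ).subset hbt
  haveI := hbfin.fintype
  have hcardb : Fintype.card b = M.rank := by
    rw [rank_eq_finrank_span_cols, Matrix.col, ← hbspan, finrank_span_set_eq_card hbli,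
      Set.toFinset_card]
  have hγ : ∀ x : b, ∃ j, Mᵀ j = (x : A → K) := fun x => hbt x.2
  choose γ hγ using hγ
  have hγinj : Function.Injective γ := fun x y hxy =>
    Subtype.ext (by rw [← hγ x, ← hγ y, hxy])
  set N : Matrix A b K := M.submatrix id γ with hN
  have hNT : ∀ x : b, Nᵀ x = (x : A → K) := fun x => hγ x
  have hrankN : N.rank = M.rank := by
    rw [← rank_transpose]
    have : (Nᵀ : b → A → K) = ((↑) : b → A → K) := funext hNT
    have h2 : LinearIndependent K (Nᵀ : b → A → K) := this ▸ hbli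
    exact h2.rank_matrix.trans hcardb
  -- rows
  obtain ⟨c, hct, hcspan, hcli⟩ := exists_linearIndependent K (Set.range N)
  have hcfin : c.Finite := (Set.finite_range N).subset hct
  haveI := hcfin.fintype
  have hcardc : Fintype.card c = M.rank := by
    rw [← hrankN, rank_eq_finrank_span_row, Matrix.row, ← hcspan, finrank_span_set_eq_card hcli,
      Set.toFinset_card]
  have hφ : ∀ y : c, ∃ a, N a = (y : b → K) := fun y => hct y.2
  choose φ hφ using hφ
  have hφinj : Function.Injective φ := fun x y hxy =>
    Subtype.ext (by rw [← hφ x, ← hφ y, hxy])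
  -- square matrix over Fin M.rank
  let ec : Fin M.rank ≃ c := (Fintype.equivFinOfCardEq hcardc).symm
  let eb : Fin M.rank ≃ b := (Fintype.equivFinOfCardEq hcardb).symm
  set Q : Matrix (Fin M.rank) (Fin M.rank) K := M.submatrix (φ ∘ ec) (γ ∘ eb) with hQ
  have hQrows : ∀ i, Q i = LinearEquiv.funCongrLeft K K eb ((ec i : b → K)) := by
    intro i
    funext j
    have : Q i j = N (φ (ec i)) (eb j) := rfl
    rw [this, hφ (ec i)]
    rfl
  have hQli : LinearIndependent K Q := by
    have h1 : LinearIndependent K (fun y : c => (y : b → K)) := hcli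
    have h2 := h1.map' (LinearEquiv.funCongrLeft K K eb).toLinearMap
      (LinearEquiv.ker _)
    have h3 := h2.comp ec ec.injective
    suffices hQe : (Q : Fin M.rank → Fin M.rank → K) =
        fun i => LinearEquiv.funCongrLeft K K eb ((ec i : b → K)) by rw [hQe]; exact h3
    funext i
    exact hQrows i
  have hQunit : IsUnit Q := linearIndependent_rows_iff_isUnit.mp hQli
  have hQdet : Q.det ≠ 0 := (Matrix.isUnit_iff_isUnit_det Q |>.mp hQunit).ne_zero
  have hσ : ∃ σ : Equiv.Perm (Fin M.rank), ∏ i, Q (σ i) i ≠ 0 := by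
    by_contra hc
    push_neg at hc
    apply hQdet
    rw [Matrix.det_apply]
    exact Finset.sum_eq_zero fun σ _ => by rw [hc σ, smul_zero]
  obtain ⟨σ, hσ⟩ := hσ
  refine ⟨φ ∘ ec ∘ σ, γ ∘ eb, hφinj.comp (ec.injective.comp σ.injective),
    hγinj.comp eb.injective, fun i => ?_⟩
  have := Finset.prod_ne_zero_iff.mp hσ i (Finset.mem_univ i)
  exact this

end Aux

theorem stmt_10 {A B : Type*} [Fintype A] [Fintype B] [DecidableEq A] [DecidableEq B]
    (S : Finset (A × B))
    (M : Matrix A B (FractionRing (MvPolynomial {s : A × B // s ∈ S} ℝ)))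
    (hM : M = Matrix.of fun a b =>
      if h : (a, b) ∈ S then
        algebraMap (MvPolynomial {s : A × B // s ∈ S} ℝ) _ (MvPolynomial.X ⟨(a, b), h⟩)
      else 0) :
    M.rank = sSup {n : ℕ | ∃ Mt : Finset (A × B), Mt ⊆ S ∧ Mt.card = n ∧
      ∀ p ∈ Mt, ∀ q ∈ Mt, p ≠ q → p.1 ≠ q.1 ∧ p.2 ≠ q.2} := by
  classical
  -- every matching has size ≤ rank
  have hub : ∀ n ∈ {n : ℕ | ∃ Mt : Finset (A × B), Mt ⊆ S ∧ Mt.card = n ∧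
      ∀ p ∈ Mt, ∀ q ∈ Mt, p ≠ q → p.1 ≠ q.1 ∧ p.2 ≠ q.2}, n ≤ M.rank := by
    rintro n ⟨Mt, hsub, hcard, hmatch⟩
    set ι := {x : A × B // x ∈ Mt}
    have hf : Function.Injective (fun x : ι => (x : A × B).1) := by
      intro x y hxy
      by_contra hne
      have hne' : (x : A × B) ≠ (y : A × B) := fun h => hne (Subtype.ext h)
      exact (hmatch _ x.2 _ y.2 hne').1 hxy
    have hg : Function.Injective (fun x : ι => (x : A × B).2) := by
      intro x y hxy
      by_contra hne
      have hne' : (x : A × B) ≠ (y : A × B) := fun h => hne (Subtype.ext h)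
      exact (hmatch _ x.2 _ y.2 hne').2 hxy
    set N : Matrix ι ι (MvPolynomial {s : A × B // s ∈ S} ℝ) := Matrix.of fun x y =>
      if h : ((x : A × B).1, (y : A × B).2) ∈ S then MvPolynomial.X ⟨_, h⟩ else 0 with hNdef
    set Q := M.submatrix (fun x : ι => (x : A × B).1)
      (fun x : ι => (x : A × B).2) with hQdef
    have hQN : Q = N.map (algebraMap (MvPolynomial {s : A × B // s ∈ S} ℝ)
        (FractionRing (MvPolynomial {s : A × B // s ∈ S} ℝ))) := by
      ext x y
      simp only [hQdef, hNdef, hM, Matrix.submatrix_apply, Matrix.map_apply, Matrix.of_apply]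
      split <;> simp
    -- det N ≠ 0 via evaluation at the indicator of the matching
    have hNdet : N.det ≠ 0 := by
      intro h0
      have hev := congrArg (MvPolynomial.eval
        (fun s : {s : A × B // s ∈ S} => if (s : A × B) ∈ Mt then (1 : ℝ) else 0)) h0
      rw [RingHom.map_det, map_zero, RingHom.mapMatrix_apply] at hev
      have hone : N.map (MvPolynomial.eval
          (fun s : {s : A × B // s ∈ S} => if (s : A × B) ∈ Mt then (1 : ℝ) else 0)) = 1 := by
        ext x y
        simp only [Matrix.map_apply, hNdef, Matrix.of_apply]
        by_cases hxy : x = y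
        · subst hxy
          have hxS : ((x : A × B).1, (x : A × B).2) ∈ S := by
            rw [Prod.mk.eta]; exact hsub x.2
          rw [dif_pos hxS, MvPolynomial.eval_X, if_pos, Matrix.one_apply_eq]
          simpa using x.2
        · rw [Matrix.one_apply_ne hxy]
          by_cases hS : ((x : A × B).1, (y : A × B).2) ∈ S
          · rw [dif_pos hS, MvPolynomial.eval_X, if_neg]
            intro hmem
            have h1 : ((x : A × B).1, (y : A × B).2) = (x : A × B) := by
              by_contra hne
              exact (hmatch _ hmem _ x.2 hne).1 rfl
            have h2 : ((x : A × B).1, (y : A × B).2) = (y : A × B) := by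
              by_contra hne
              exact (hmatch _ hmem _ y.2 hne).2 rfl
            exact hxy (Subtype.ext (h1 ▸ h2))
          · rw [dif_neg hS, map_zero]
      rw [hone, Matrix.det_one] at hev
      exact one_ne_zero hev
    have hQdet : Q.det ≠ 0 := by
      rw [hQN, ← RingHom.mapMatrix_apply, ← RingHom.map_det]
      intro h
      exact hNdet (IsFractionRing.injective (MvPolynomial {s : A × B // s ∈ S} ℝ)
        (FractionRing (MvPolynomial {s : A × B // s ∈ S} ℝ)) (by rw [h, map_zero]))
    have hQrank : Q.rank = n := by
      rw [Matrix.rank_of_isUnit Q ((Matrix.isUnit_iff_isUnit_det Q).mpr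
        (isUnit_iff_ne_zero.mpr hQdet))]
      rw [Fintype.card_coe, hcard]
    calc n = Q.rank := hQrank.symm
      _ ≤ M.rank := my_rank_submatrix_le M _ _
  -- the rank itself is achieved by a matching
  have hmem : M.rank ∈ {n : ℕ | ∃ Mt : Finset (A × B), Mt ⊆ S ∧ Mt.card = n ∧
      ∀ p ∈ Mt, ∀ q ∈ Mt, p ≠ q → p.1 ≠ q.1 ∧ p.2 ≠ q.2} := by
    obtain ⟨f, g, hf, hg, hne⟩ := my_exists_inj M
    refine ⟨Finset.image (fun i => (f i, g i)) Finset.univ, ?_, ?_, ?_⟩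
    · intro p hp
      simp only [Finset.mem_image, Finset.mem_univ, true_and] at hp
      obtain ⟨i, rfl⟩ := hp
      by_contra hS
      apply hne i
      rw [hM]
      exact dif_neg hS
    · rw [Finset.card_image_of_injective _ (fun i j hij => hf (congrArg Prod.fst hij)),
        Finset.card_univ, Fintype.card_fin]
    · intro p hp q hq hpq
      simp only [Finset.mem_image, Finset.mem_univ, true_and] at hp hq
      obtain ⟨i, rfl⟩ := hp
      obtain ⟨j, rfl⟩ := hq
      have hij : i ≠ j := fun h => hpq (by rw [h])
      exact ⟨fun h => hij (hf h), fun h => hij (hg h)⟩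
  have hbdd : BddAbove {n : ℕ | ∃ Mt : Finset (A × B), Mt ⊆ S ∧ Mt.card = n ∧
      ∀ p ∈ Mt, ∀ q ∈ Mt, p ≠ q → p.1 ≠ q.1 ∧ p.2 ≠ q.2} := by
    refine ⟨S.card, ?_⟩
    rintro n ⟨Mt, hsub, hcard, -⟩
    exact hcard ▸ Finset.card_le_card hsub
  exact le_antisymm (le_csSup hbdd hmem) (csSup_le ⟨M.rank, hmem⟩ hub)
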